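/- Let M_t ≥ 1, M_r ≥ 1 be integers, n ≥ 1 an integer, and b real with (M_t − 1)(M_r − 1) ≤ b < M_t·M_r and b > 0. Set P = M_t·M_r, Q = M_t + M_r − 1, η = (b − (M_t − 1)(M_r − 1))/Q (so 0 ≤ η < 1), r_1 = P(1 − η)/(P − b·η^n), and r_i = η^{i−1}·r_1 for i = 1, …, n. Let S_i = Σ_{j=1}^i r_j and d_i = P(1 − S_{i−1}) − Q·r_i for i = 1, …, n. Define E_i = d_{i+1} + b·S_i for i = 0, 1, …, n−1 and E_n = b·S_n. Then E_0 = E_1 = ⋯ = E_n = b·P·(1 − η^n)/(P − b·η^n), and moreover S_n = P(1 − η^n)/(P − b·η^n) ≤ 1. -/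

import Mathlib

/-- The geometric multiplexing-gain allocation for `n`-layer BS over a
single-block `M_t × M_r` MIMO channel at bandwidth ratio
`(M_t-1)(M_r-1) ≤ b < M_t M_r` equalizes all `n+1` SNR exponents
`E_0 = ⋯ = E_n = bP(1 - η^n)/(P - bη^n)`, and the total multiplexing gain
satisfies `S_n = P(1 - η^n)/(P - bη^n) ≤ 1`. -/
theorem stmt_12 (Mt Mr n : ℕ) (hMt : 1 ≤ Mt) (hMr : 1 ≤ Mr) (hn : 1 ≤ n)
    (b : ℝ) (hb0 : 0 < b)
    (hb1 : ((Mt : ℝ) - 1) * ((Mr : ℝ) - 1) ≤ b) (hb2 : b < (Mt : ℝ) * Mr)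
    (P Q η r1 : ℝ) (r S E : ℕ → ℝ)
    (hP : P = (Mt : ℝ) * Mr) (hQ : Q = (Mt : ℝ) + Mr - 1)
    (hη : η = (b - ((Mt : ℝ) - 1) * ((Mr : ℝ) - 1)) / Q)
    (hr1 : r1 = P * (1 - η) / (P - b * η ^ n))
    -- `r i` is the multiplexing gain of layer `i+1`: `r_{i+1} = η^i r_1`
    (hr : ∀ i, r i = η ^ i * r1)
    (hS : ∀ i, S i = ∑ j ∈ Finset.range i, r j)
    -- `E i = d_{i+1} + b S_i` for `i < n`, with
    -- `d_{i+1} = P(1 - S_i) - Q r_{i+1}`, and `E n = b S_n`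
    (hE : ∀ i, E i = if i = n then b * S n else P * (1 - S i) - Q * r i + b * S i) :
    (∀ i ≤ n, E i = b * P * (1 - η ^ n) / (P - b * η ^ n)) ∧
    S n = P * (1 - η ^ n) / (P - b * η ^ n) ∧ S n ≤ 1 := by
  have hMt1 : (1 : ℝ) ≤ Mt := by exact_mod_cast hMt
  have hMr1 : (1 : ℝ) ≤ Mr := by exact_mod_cast hMr
  have hQpos : 0 < Q := by rw [hQ]; linarith
  have key : Q * η = b - P + Q := by
    rw [hη]; field_simp; rw [hP, hQ]; ring
  have hη0 : 0 ≤ η := by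
    rw [hη]
    apply div_nonneg _ hQpos.le
    nlinarith
  have hη1 : η < 1 := by
    nlinarith [hb2, key, hP]
  have hηn1 : η ^ n ≤ 1 := pow_le_one₀ hη0 hη1.le
  have hPpos : 0 < P := by nlinarith
  have hD : 0 < P - b * η ^ n := by nlinarith
  have hDne : P - b * η ^ n ≠ 0 := ne_of_gt hD
  have hηne : η - 1 ≠ 0 := by intro h; nlinarith
  have Sform : ∀ i, S i = P * (1 - η ^ i) / (P - b * η ^ n) := by
    intro i
    rw [hS]
    have : ∀ j ∈ Finset.range i, r j = η ^ j * r1 := fun j _ => hr j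
    rw [Finset.sum_congr rfl this, ← Finset.sum_mul, geom_sum_eq (by
      intro h; exact hηne (by rw [h]; ring)) i, hr1]
    field_simp
    ring
  have Eval : ∀ i, E i = b * P * (1 - η ^ n) / (P - b * η ^ n) := by
    intro i
    rw [hE]
    by_cases h : i = n
    · rw [if_pos h, Sform]
      field_simp
    · rw [if_neg h, Sform, hr, hr1]
      field_simp
      linear_combination (η ^ i) * key
  refine ⟨fun i _ => Eval i, Sform n, ?_⟩
  rw [Sform n, div_le_one hD]
  nlinarith [pow_nonneg hη0 n]
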